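/- Let a > b > 0 and Z_i^n be as in the Jackson stationary distribution (Z_i^n ∼ Geometric on ℕ_0 with success probability 1 − ρ_i^{(n)} where ρ_i^{(n)} = (1 − a n^{−3/2})^{n−i+1} for 2 ≤ i ≤ n, independent). Then E[Σ_{i=2}^n Z_i^n] / (n^{3/2} a^{−1} log n) → 1 as n → ∞. -/

import Mathlib

open Filter Finset MeasureTheory
open scoped ENNReal


lemma lintegral_nat_tail {Ω : Type*} [MeasurableSpace Ω] (μ : Measure Ω) (f : Ω → ℕ)
    (hf : Measurable f) :
    ∫⁻ ω, (f ω : ℝ≥0∞) ∂μ = ∑' m : ℕ, μ {ω | m + 1 ≤ f ω} := by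
  have hms : ∀ m : ℕ, MeasurableSet {ω | m + 1 ≤ f ω} := by
    intro m
    exact hf (measurableSet_Ici (a := m+1))
  have key : ∀ ω, (f ω : ℝ≥0∞)
      = ∑' m : ℕ, Set.indicator {ω | m + 1 ≤ f ω} (fun _ => (1:ℝ≥0∞)) ω := by
    intro ω
    rw [tsum_eq_sum (s := Finset.range (f ω)) (by
      intro m hm
      simp only [Finset.mem_range, not_lt] at hm
      simp only [Set.indicator_apply, Set.mem_setOf_eq, ite_eq_right_iff]
      intro h; omega)]
    have : ∀ m ∈ Finset.range (f ω),
        Set.indicator {ω | m + 1 ≤ f ω} (fun _ => (1:ℝ≥0∞)) ω = 1 := by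
      intro m hm
      simp only [Finset.mem_range] at hm
      simp [Set.indicator_apply, Nat.succ_le_of_lt hm, hm]
    rw [Finset.sum_congr rfl this]
    simp
  simp_rw [key]
  rw [lintegral_tsum (fun m => ((measurable_const (a := (1:ℝ≥0∞))).indicator
    (hms m)).aemeasurable)]
  exact tsum_congr fun m => lintegral_indicator_one (hms m)

lemma geom_expect {Ω : Type*} [MeasurableSpace Ω] (μ : Measure Ω) [IsProbabilityMeasure μ]
    (f : Ω → ℕ) (hf : Measurable f) (ρ : ℝ) (h0 : 0 ≤ ρ) (h1 : ρ < 1)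
    (htail : ∀ m : ℕ, μ {ω | m ≤ f ω} = ENNReal.ofReal (ρ ^ m)) :
    Integrable (fun ω => (f ω : ℝ)) μ ∧ ∫ ω, (f ω : ℝ) ∂μ = ρ / (1 - ρ) := by
  have hsum : Summable (fun m : ℕ => ρ ^ (m + 1)) := by
    simp_rw [pow_succ']
    exact (summable_geometric_of_lt_one h0 h1).mul_left ρ
  have htsum : ∑' m : ℕ, ρ ^ (m + 1) = ρ / (1 - ρ) := by
    simp_rw [pow_succ']
    rw [tsum_mul_left, tsum_geometric_of_lt_one h0 h1, div_eq_mul_inv]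
  have hlin : ∫⁻ ω, (f ω : ℝ≥0∞) ∂μ = ENNReal.ofReal (ρ / (1 - ρ)) := by
    rw [lintegral_nat_tail μ f hf]
    have : ∀ m : ℕ, μ {ω | m + 1 ≤ f ω} = ENNReal.ofReal (ρ ^ (m + 1)) :=
      fun m => htail (m + 1)
    simp_rw [this]
    rw [← ENNReal.ofReal_tsum_of_nonneg (fun m => pow_nonneg h0 _) hsum, htsum]
  have hmeasR : Measurable (fun ω => (f ω : ℝ)) := measurable_from_top.comp hf
  have hint : Integrable (fun ω => (f ω : ℝ)) μ := by
    refine ⟨hmeasR.aestronglyMeasurable, ?_⟩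
    simp only [HasFiniteIntegral]
    have : ∀ ω, ‖(f ω : ℝ)‖ₑ = (f ω : ℝ≥0∞) := by
      intro ω; simp
    simp_rw [this, hlin]
    exact ENNReal.ofReal_lt_top
  refine ⟨hint, ?_⟩
  rw [integral_eq_lintegral_of_nonneg_ae (Filter.Eventually.of_forall (fun ω => by positivity))
    hmeasR.aestronglyMeasurable]
  simp_rw [ENNReal.ofReal_natCast, hlin]
  rw [ENNReal.toReal_ofReal (div_nonneg h0 (by linarith))]

lemma geom_id (q : ℝ) (k : ℕ) : 1 - q ^ k = (1 - q) * ∑ j ∈ range k, q ^ j := by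
  have h := geom_sum_mul q k
  linear_combination h

lemma geom_ub {q : ℝ} (h0 : 0 ≤ q) (h1 : q ≤ 1) (k : ℕ) :
    (1:ℝ) - q ^ k ≤ k * (1 - q) := by
  rw [geom_id q k, mul_comm]
  refine mul_le_mul_of_nonneg_right ?_ (by linarith)
  calc ∑ j ∈ range k, q ^ j ≤ ∑ _j ∈ range k, (1:ℝ) :=
        Finset.sum_le_sum fun j _ => pow_le_one₀ h0 h1
    _ = k := by simp

lemma geom_lb {q : ℝ} (h0 : 0 ≤ q) (h1 : q ≤ 1) {k : ℕ} (hk : 1 ≤ k) :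
    (k:ℝ) * q ^ (k-1) * (1 - q) ≤ 1 - q ^ k := by
  rw [geom_id q k, mul_comm (1 - q) _]
  refine mul_le_mul_of_nonneg_right ?_ (by linarith)
  calc (k:ℝ) * q ^ (k-1) = ∑ _j ∈ range k, q ^ (k-1) := by
        rw [Finset.sum_const, card_range, nsmul_eq_mul]
    _ ≤ ∑ j ∈ range k, q ^ j := Finset.sum_le_sum fun j hj =>
        pow_le_pow_of_le_one h0 h1 (by simp only [mem_range] at hj; omega)

lemma ratio_bounds (a : ℝ) (ha : 0 < a) (n : ℕ) (hn : 3 ≤ n)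
    (hlt : a < (n : ℝ) ^ ((3:ℝ)/2)) :
    (1 - a / (n:ℝ) ^ ((1:ℝ)/2))
      ≤ (∑ i ∈ Icc 2 n, (1 - a / (n : ℝ) ^ ((3 : ℝ) / 2)) ^ (n - i + 1)
          / (1 - (1 - a / (n : ℝ) ^ ((3 : ℝ) / 2)) ^ (n - i + 1)))
        / ((n : ℝ) ^ ((3 : ℝ) / 2) * a⁻¹ * Real.log n)
    ∧ (∑ i ∈ Icc 2 n, (1 - a / (n : ℝ) ^ ((3 : ℝ) / 2)) ^ (n - i + 1)
          / (1 - (1 - a / (n : ℝ) ^ ((3 : ℝ) / 2)) ^ (n - i + 1)))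
        / ((n : ℝ) ^ ((3 : ℝ) / 2) * a⁻¹ * Real.log n) ≤ 1 + (Real.log n)⁻¹ := by
  have hn0 : (0:ℝ) < n := by positivity
  have hn3 : (3:ℝ) ≤ (n:ℝ) := by exact_mod_cast hn
  have hp : (0:ℝ) < (n:ℝ) ^ ((3:ℝ)/2) := Real.rpow_pos_of_pos hn0 _
  set p : ℝ := (n:ℝ) ^ ((3:ℝ)/2) with hpdef
  set ε : ℝ := a / p with hεdef
  have hε0 : 0 < ε := div_pos ha hp
  have hε1 : ε < 1 := (div_lt_one hp).2 hlt
  set q : ℝ := 1 - ε with hqdef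
  have hq0 : 0 < q := by rw [hqdef]; linarith
  have hq1 : q < 1 := by rw [hqdef]; linarith
  set L : ℝ := Real.log n with hLdef
  have hlog : 0 < L := Real.log_pos (by linarith)
  set H : ℝ := ∑ k ∈ Icc 1 (n-1), ((k:ℝ))⁻¹ with hHdef
  clear_value p L
  have h1ρ : ∀ k : ℕ, 1 ≤ k → 0 < 1 - q ^ k := by
    intro k hk
    have := pow_lt_one₀ hq0.le hq1 (by omega : k ≠ 0)
    linarith
  have h1qpos : (0:ℝ) < 1 - q := by rw [hqdef]; linarith
  -- termwise bounds
  have hterm_up : ∀ i ∈ Icc 2 n, q ^ (n-i+1) / (1 - q ^ (n-i+1))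
      ≤ ((n-i+1 : ℕ):ℝ)⁻¹ * (1 - q)⁻¹ := by
    intro i hi
    simp only [mem_Icc] at hi
    set k := n - i + 1 with hk
    have hk1 : 1 ≤ k := by omega
    have hkpos : (0:ℝ) < (k:ℝ) := by exact_mod_cast (by omega : 0 < k)
    have h1k := h1ρ k hk1
    have heq : ((k:ℝ))⁻¹ * (1-q)⁻¹ = 1 / ((k:ℝ) * (1-q)) := by
      rw [one_div, mul_inv]
    rw [heq, div_le_div_iff₀ h1k (mul_pos hkpos h1qpos)]
    have hpk : q ^ k = q ^ (k-1) * q := by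
      rw [← pow_succ, Nat.sub_add_cancel hk1]
    have hlbk := geom_lb hq0.le hq1.le hk1
    calc q ^ k * ((k:ℝ) * (1-q)) = q * ((k:ℝ) * q ^ (k-1) * (1-q)) := by rw [hpk]; ring
      _ ≤ q * (1 - q ^ k) := mul_le_mul_of_nonneg_left hlbk hq0.le
      _ ≤ 1 * (1 - q ^ k) := mul_le_mul_of_nonneg_right hq1.le h1k.le
  have hterm_lo : ∀ i ∈ Icc 2 n, q ^ n * (((n-i+1 : ℕ):ℝ)⁻¹ * (1 - q)⁻¹)
      ≤ q ^ (n-i+1) / (1 - q ^ (n-i+1)) := by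
    intro i hi
    simp only [mem_Icc] at hi
    set k := n - i + 1 with hk
    have hk1 : 1 ≤ k := by omega
    have hkn : k ≤ n := by omega
    have hkpos : (0:ℝ) < (k:ℝ) := by exact_mod_cast (by omega : 0 < k)
    have h1k := h1ρ k hk1
    have hqnk : q ^ n ≤ q ^ k := pow_le_pow_of_le_one hq0.le hq1.le hkn
    rw [le_div_iff₀ h1k]
    have hubk := geom_ub hq0.le hq1.le k
    have hqn0 : (0:ℝ) ≤ q ^ n := pow_nonneg hq0.le _
    calc q ^ n * ((k:ℝ)⁻¹ * (1-q)⁻¹) * (1 - q ^ k)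
        ≤ q ^ n * ((k:ℝ)⁻¹ * (1-q)⁻¹) * ((k:ℝ) * (1-q)) := by
          refine mul_le_mul_of_nonneg_left hubk
            (mul_nonneg hqn0 (mul_nonneg (inv_nonneg.2 hkpos.le) (inv_nonneg.2 h1qpos.le)))
      _ = q ^ n := by
          field_simp
      _ ≤ q ^ k := hqnk
  -- reindexing
  have hre : ∑ i ∈ Icc 2 n, ((n-i+1 : ℕ):ℝ)⁻¹ = H := by
    rw [hHdef]
    refine Finset.sum_nbij' (fun i => n + 1 - i) (fun k => n + 1 - k) ?_ ?_ ?_ ?_ ?_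
    · intro i hi; simp only [mem_Icc] at hi ⊢; omega
    · intro k hk; simp only [mem_Icc] at hk ⊢; omega
    · intro i hi; simp only [mem_Icc] at hi; omega
    · intro k hk; simp only [mem_Icc] at hk; omega
    · intro i hi; simp only [mem_Icc] at hi
      have : n - i + 1 = n + 1 - i := by omega
      rw [this]
  -- sum bounds
  set E : ℝ := ∑ i ∈ Icc 2 n, q ^ (n-i+1) / (1 - q ^ (n-i+1)) with hEdef
  have hEup : E ≤ (1 - q)⁻¹ * H := by
    calc E ≤ ∑ i ∈ Icc 2 n, ((n-i+1 : ℕ):ℝ)⁻¹ * (1 - q)⁻¹ :=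
          Finset.sum_le_sum hterm_up
      _ = (1 - q)⁻¹ * ∑ i ∈ Icc 2 n, ((n-i+1 : ℕ):ℝ)⁻¹ := by
          rw [Finset.mul_sum]
          refine Finset.sum_congr rfl fun i _ => ?_
          ring
      _ = (1 - q)⁻¹ * H := by rw [hre]
  have hElo : q ^ n * ((1 - q)⁻¹ * H) ≤ E := by
    calc q ^ n * ((1 - q)⁻¹ * H)
        = ∑ i ∈ Icc 2 n, q ^ n * (((n-i+1 : ℕ):ℝ)⁻¹ * (1 - q)⁻¹) := by
          rw [← hre, Finset.mul_sum, Finset.mul_sum]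
          refine Finset.sum_congr rfl fun i _ => ?_
          ring
      _ ≤ E := Finset.sum_le_sum hterm_lo
  -- harmonic bounds
  have hcast : ((harmonic (n-1) : ℚ) : ℝ) = H := by
    rw [harmonic_eq_sum_Icc, hHdef]
    push_cast
    rfl
  have hHlo : L ≤ H := by
    have h := log_add_one_le_harmonic (n-1)
    rw [hcast] at h
    have h2 : ((n - 1 + 1 : ℕ) : ℝ) = (n:ℝ) := by
      congr 1
      omega
    rw [h2, ← hLdef] at h
    exact h
  have hHup : H ≤ 1 + L := by
    have h := harmonic_le_one_add_log (n-1)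
    rw [hcast] at h
    have hmono : Real.log ((n-1 : ℕ):ℝ) ≤ L := by
      rw [hLdef]
      exact Real.log_le_log (by exact_mod_cast (by omega : 0 < n - 1))
        (by exact_mod_cast (by omega : n - 1 ≤ n))
    linarith
  -- assembling
  set D : ℝ := p * a⁻¹ * L with hDdef
  have hinv : (1 - q)⁻¹ = p * a⁻¹ := by
    rw [hqdef, hεdef, sub_sub_cancel, inv_div, div_eq_mul_inv]
  have hDeq : D = (1 - q)⁻¹ * L := by rw [hDdef, hinv]
  have hiq : 0 < (1 - q)⁻¹ := inv_pos.2 h1qpos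
  have hD : 0 < D := by rw [hDeq]; exact mul_pos hiq hlog
  constructor
  · -- lower bound
    have hqn0 : (0:ℝ) ≤ q ^ n := pow_nonneg hq0.le _
    have hid : (n:ℝ) * ε = a / (n:ℝ) ^ ((1:ℝ)/2) := by
      have hnp : (n:ℝ) / p = ((n:ℝ) ^ ((1:ℝ)/2))⁻¹ := by
        rw [hpdef]
        rw [show (n:ℝ) / (n:ℝ) ^ ((3:ℝ)/2)
            = (n:ℝ) ^ (1:ℝ) / (n:ℝ) ^ ((3:ℝ)/2) by rw [Real.rpow_one]]
        rw [← Real.rpow_sub hn0]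
        rw [show (1:ℝ) - 3/2 = -(1/2) by norm_num]
        rw [Real.rpow_neg hn0.le]
      rw [hεdef, show (n:ℝ) * (a / p) = a * ((n:ℝ) / p) by ring, hnp, ← div_eq_mul_inv]
    have step1 : 1 - a / (n:ℝ) ^ ((1:ℝ)/2) ≤ q ^ n := by
      have hber := one_add_mul_le_pow (a := -ε) (by linarith) n
      have h1e : (1 : ℝ) + -ε = q := by rw [hqdef]; ring
      rw [h1e] at hber
      rw [← hid]
      linarith
    have step2 : q ^ n ≤ E / D := by
      have hHL : 1 ≤ H / L := (one_le_div hlog).2 hHlo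
      calc q ^ n ≤ q ^ n * (H / L) := le_mul_of_one_le_right hqn0 hHL
        _ = q ^ n * ((1 - q)⁻¹ * H) / D := by
            rw [hDeq, show q ^ n * ((1 - q)⁻¹ * H) = (1 - q)⁻¹ * (q ^ n * H) by ring,
              mul_div_mul_left _ _ (ne_of_gt hiq), mul_div_assoc]
        _ ≤ E / D := div_le_div_of_nonneg_right hElo hD.le
    linarith
  · -- upper bound
    have step1 : E / D ≤ H / L := by
      calc E / D ≤ ((1 - q)⁻¹ * H) / D := div_le_div_of_nonneg_right hEup hD.le
        _ = H / L := by rw [hDeq, mul_div_mul_left _ _ (ne_of_gt hiq)]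
    have step2 : H / L ≤ 1 + L⁻¹ := by
      rw [div_le_iff₀ hlog]
      have h : (1 + L⁻¹) * L = L + 1 := by field_simp
      rw [h]; linarith
    linarith

/-- Asymptotics of the expected system imbalance
`E[X_{(n)}^n − X_{(1)}^n] = E[Σ_{i=2}^n Z_i^n]`, where `Z_i^n` are independent
geometric random variables on `ℕ₀` with success probabilities `1 − ρ_i^{(n)}`,
`ρ_i^{(n)} = (1 − a n^{−3/2})^{n−i+1}` for `2 ≤ i ≤ n`:
`E[Σ_{i=2}^n Z_i^n] / (n^{3/2} a^{−1} log n) → 1`. -/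
theorem expected_imbalance_asymptotics
    (a b : ℝ) (hb : 0 < b) (hab : b < a)
    {Ω : Type*} [MeasurableSpace Ω] (μ : Measure Ω) [IsProbabilityMeasure μ]
    (Z : ℕ → ℕ → Ω → ℕ)
    (hmeas : ∀ n i, Measurable (Z n i))
    (htail : ∀ n, 1 ≤ n → ∀ i, 2 ≤ i → i ≤ n → ∀ m : ℕ,
      μ {ω | m ≤ Z n i ω}
        = ENNReal.ofReal (((1 - a / (n : ℝ) ^ ((3 : ℝ) / 2)) ^ (n - i + 1)) ^ m)) :
    Tendsto
      (fun n : ℕ =>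
        (∫ ω, ∑ i ∈ Icc 2 n, (Z n i ω : ℝ) ∂μ)
          / ((n : ℝ) ^ ((3 : ℝ) / 2) * a⁻¹ * Real.log n))
      atTop (nhds 1) := by

  have ha : 0 < a := hb.trans hab
  have htp : Tendsto (fun n : ℕ => (n:ℝ) ^ ((3:ℝ)/2)) atTop atTop :=
    (tendsto_rpow_atTop (by norm_num)).comp tendsto_natCast_atTop_atTop
  have hev : ∀ᶠ n : ℕ in atTop, 3 ≤ n ∧ a < (n:ℝ) ^ ((3:ℝ)/2) :=
    (eventually_ge_atTop 3).and (htp.eventually_gt_atTop a)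
  have hkey : ∀ᶠ n : ℕ in atTop,
      (∫ ω, ∑ i ∈ Icc 2 n, (Z n i ω : ℝ) ∂μ)
        = ∑ i ∈ Icc 2 n, (1 - a / (n : ℝ) ^ ((3 : ℝ) / 2)) ^ (n - i + 1)
          / (1 - (1 - a / (n : ℝ) ^ ((3 : ℝ) / 2)) ^ (n - i + 1)) := by
    filter_upwards [hev] with n hn
    obtain ⟨hn3, hlt⟩ := hn
    have hn0 : (0:ℝ) < n := by
      have : (3:ℝ) ≤ (n:ℝ) := by exact_mod_cast hn3
      linarith
    have hp : (0:ℝ) < (n:ℝ) ^ ((3:ℝ)/2) := Real.rpow_pos_of_pos hn0 _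
    have hq0 : 0 ≤ 1 - a / (n:ℝ) ^ ((3:ℝ)/2) := by
      have := (div_le_one hp).2 hlt.le
      linarith
    have hq1 : 1 - a / (n:ℝ) ^ ((3:ℝ)/2) < 1 := by
      have := div_pos ha hp
      linarith
    have hkk : ∀ i ∈ Icc 2 n,
        Integrable (fun ω => (Z n i ω : ℝ)) μ ∧
        ∫ ω, (Z n i ω : ℝ) ∂μ
          = (1 - a / (n : ℝ) ^ ((3 : ℝ) / 2)) ^ (n - i + 1)
            / (1 - (1 - a / (n : ℝ) ^ ((3 : ℝ) / 2)) ^ (n - i + 1)) := by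
      intro i hi
      simp only [mem_Icc] at hi
      exact geom_expect μ (Z n i) (hmeas n i) _
        (pow_nonneg hq0 _) (pow_lt_one₀ hq0 hq1 (by omega))
        (htail n (by omega) i hi.1 hi.2)
    rw [integral_finset_sum _ (fun i hi => (hkk i hi).1)]
    exact Finset.sum_congr rfl fun i hi => (hkk i hi).2
  have hlow_t : Tendsto (fun n : ℕ => 1 - a / (n:ℝ) ^ ((1:ℝ)/2)) atTop (nhds 1) := by
    have h1 : Tendsto (fun n : ℕ => a / (n:ℝ) ^ ((1:ℝ)/2)) atTop (nhds 0) :=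
      Tendsto.div_atTop tendsto_const_nhds
        ((tendsto_rpow_atTop (by norm_num)).comp tendsto_natCast_atTop_atTop)
    simpa using tendsto_const_nhds.sub h1
  have hup_t : Tendsto (fun n : ℕ => 1 + (Real.log n)⁻¹) atTop (nhds 1) := by
    have h1 : Tendsto (fun n : ℕ => (Real.log n)⁻¹) atTop (nhds 0) :=
      (Real.tendsto_log_atTop.comp tendsto_natCast_atTop_atTop).inv_tendsto_atTop
    simpa using tendsto_const_nhds.add h1
  refine tendsto_of_tendsto_of_tendsto_of_le_of_le' hlow_t hup_t ?_ ?_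
  · filter_upwards [hev, hkey] with n hn hk
    rw [hk]
    exact (ratio_bounds a ha n hn.1 hn.2).1
  · filter_upwards [hev, hkey] with n hn hk
    rw [hk]
    exact (ratio_bounds a ha n hn.1 hn.2).2
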